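/- (Relation between skew and Helstrom information in 2-dimensional mixed states.) With ρ(θ) = w(θ)ρ₁ + (1−w(θ))ρ₂ as above, I_WY(θ) = α_w(θ)·I_H(θ) + β_w(θ), where α_w = 2/(1 + 2√(w(1−w))), β_w = −((1−2√(w(1−w)))/(1+2√(w(1−w))))·(w')²/(w(1−w)), and I_H(θ) = (w')²/(w(1−w)) + (2w−1)²·I_{H1}(θ) with I_{H1} = 2·trace((ρ₁')²) and I_WY1 = 2·I_{H1}. -/

import Mathlib

theorem stmt11 (w w' IH1 : ℝ) (hw0 : 0 < w) (hw1 : w < 1) (hwhalf : w ≠ 1 / 2) :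
    let IWY1 : ℝ := 2 * IH1
    let IH : ℝ := w' ^ 2 / (w * (1 - w)) + (2 * w - 1) ^ 2 * IH1
    let IWY : ℝ := w' ^ 2 / (w * (1 - w))
      + (1 - 2 * Real.sqrt (w * (1 - w))) * IWY1
    let α : ℝ := 2 / (1 + 2 * Real.sqrt (w * (1 - w)))
    let β : ℝ := -((1 - 2 * Real.sqrt (w * (1 - w)))
      / (1 + 2 * Real.sqrt (w * (1 - w)))) * (w' ^ 2 / (w * (1 - w)))
    IWY = α * IH + β := by
  intro IWY1 IH IWY α β
  have hpos : (0:ℝ) < w * (1 - w) := mul_pos hw0 (by linarith)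
  set s := Real.sqrt (w * (1 - w)) with hs
  have hs2 : s ^ 2 = w * (1 - w) := Real.sq_sqrt hpos.le
  have hsnn : 0 ≤ s := Real.sqrt_nonneg _
  have hden : (0:ℝ) < 1 + 2 * s := by linarith
  simp only [IWY, IWY1, α, IH, β]
  field_simp
  rw [← hs]
  linear_combination (-8 * w * IH1) * hs2
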